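/- Under the sensitivity assumption (1/γ)·P(T=1|Y₀=1,D=1,X=x) ≤ P(T=1|Y₀=0,D=1,X=x) ≤ γ·P(T=1|Y₀=1,D=1,X=x) with γ ≥ 1, it holds that P(T=1|Y₀=1,D=1,X=x) ≥ P(T=1|D=1,X=x) / (P(Y₀=1|D=1,X=x) + γ(1 − P(Y₀=1|D=1,X=x))). -/

import Mathlib

open MeasureTheory

/-- Conditional probability `P(A | B) = P(A ∩ B) / P(B)` as a real number. -/
noncomputable def condP {Ω : Type*} [MeasurableSpace Ω] (μ : Measure Ω) (A B : Set Ω) : ℝ :=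
  (μ (A ∩ B)).toReal / (μ B).toReal

/-- Sensitivity-model lower bound: under
`(1/γ)·P(T=1|Y₀=1,D=1,X=x) ≤ P(T=1|Y₀=0,D=1,X=x) ≤ γ·P(T=1|Y₀=1,D=1,X=x)` with `γ ≥ 1`,
`P(T=1|Y₀=1,D=1,X=x) ≥ P(T=1|D=1,X=x)/(P(Y₀=1|D=1,X=x) + γ(1 − P(Y₀=1|D=1,X=x)))`. -/
theorem sensitivity_lower_bound
    {Ω ι : Type*} [MeasurableSpace Ω]
    (μ : Measure Ω) [IsProbabilityMeasure μ]
    (T Y0 D : Ω → ℕ) (X : Ω → ι) (x : ι) (γ : ℝ) (hγ : 1 ≤ γ)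
    (hTm : Measurable T) (hY0m : Measurable Y0) (hDm : Measurable D)
    (hXx : MeasurableSet {ω | X ω = x})
    (hY0bin : ∀ ω, Y0 ω = 0 ∨ Y0 ω = 1)
    (hpos : 0 < μ ({ω | D ω = 1} ∩ {ω | X ω = x}))
    (hpos1 : 0 < μ ({ω | Y0 ω = 1} ∩ ({ω | D ω = 1} ∩ {ω | X ω = x})))
    (hpos0 : 0 < μ ({ω | Y0 ω = 0} ∩ ({ω | D ω = 1} ∩ {ω | X ω = x})))
    (hsensL : (1 / γ) *
        condP μ {ω | T ω = 1} ({ω | Y0 ω = 1} ∩ ({ω | D ω = 1} ∩ {ω | X ω = x})) ≤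
      condP μ {ω | T ω = 1} ({ω | Y0 ω = 0} ∩ ({ω | D ω = 1} ∩ {ω | X ω = x})))
    (hsensU : condP μ {ω | T ω = 1} ({ω | Y0 ω = 0} ∩ ({ω | D ω = 1} ∩ {ω | X ω = x})) ≤
      γ * condP μ {ω | T ω = 1} ({ω | Y0 ω = 1} ∩ ({ω | D ω = 1} ∩ {ω | X ω = x}))) :
    condP μ {ω | T ω = 1} ({ω | D ω = 1} ∩ {ω | X ω = x}) /
        (condP μ {ω | Y0 ω = 1} ({ω | D ω = 1} ∩ {ω | X ω = x}) +
          γ * (1 - condP μ {ω | Y0 ω = 1} ({ω | D ω = 1} ∩ {ω | X ω = x}))) ≤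
      condP μ {ω | T ω = 1} ({ω | Y0 ω = 1} ∩ ({ω | D ω = 1} ∩ {ω | X ω = x})) := by
  classical
  set B : Set Ω := {ω | D ω = 1} ∩ {ω | X ω = x} with hB
  set B1 : Set Ω := {ω | Y0 ω = 1} ∩ B with hB1
  set B0 : Set Ω := {ω | Y0 ω = 0} ∩ B with hB0
  have hBm : MeasurableSet B := ((hDm (measurableSet_singleton 1))).inter hXx
  have hB1m : MeasurableSet B1 := (hY0m (measurableSet_singleton 1)).inter hBm
  have hB0m : MeasurableSet B0 := (hY0m (measurableSet_singleton 0)).inter hBm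
  have hdisj : Disjoint B0 B1 := by
    refine Set.disjoint_left.2 ?_
    rintro ω ⟨h0, -⟩ ⟨h1, -⟩
    simp only [Set.mem_setOf_eq] at h0 h1
    omega
  have hunion : B0 ∪ B1 = B := by
    ext ω
    simp only [hB0, hB1, Set.mem_union, Set.mem_inter_iff, Set.mem_setOf_eq]
    rcases hY0bin ω with h | h <;> simp [h] <;> tauto
  have hfin : ∀ s : Set Ω, μ s ≠ ⊤ := fun s => (measure_lt_top μ s).ne
  -- split measures
  have hsplitB : μ B = μ B0 + μ B1 := by
    rw [← hunion, measure_union hdisj hB1m]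
  have hsplitT : μ ({ω | T ω = 1} ∩ B) = μ ({ω | T ω = 1} ∩ B0) + μ ({ω | T ω = 1} ∩ B1) := by
    rw [← hunion, Set.inter_union_distrib_left]
    exact measure_union (hdisj.mono Set.inter_subset_right Set.inter_subset_right)
        ((hTm (measurableSet_singleton 1)).inter hB1m)
  -- real quantities
  set m : ℝ := (μ B).toReal
  set m1 : ℝ := (μ B1).toReal
  set m0 : ℝ := (μ B0).toReal
  set t : ℝ := (μ ({ω | T ω = 1} ∩ B)).toReal
  set t1 : ℝ := (μ ({ω | T ω = 1} ∩ B1)).toReal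
  set t0 : ℝ := (μ ({ω | T ω = 1} ∩ B0)).toReal
  have hm : m = m0 + m1 := by
    simp only [m, m0, m1, hsplitB, ENNReal.toReal_add (hfin _) (hfin _)]
  have ht : t = t0 + t1 := by
    simp only [t, t0, t1, hsplitT, ENNReal.toReal_add (hfin _) (hfin _)]
  have hm1 : 0 < m1 := ENNReal.toReal_pos hpos1.ne' (hfin _)
  have hm0 : 0 < m0 := ENNReal.toReal_pos hpos0.ne' (hfin _)
  have ht1 : 0 ≤ t1 := ENNReal.toReal_nonneg
  have ht0 : 0 ≤ t0 := ENNReal.toReal_nonneg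
  have hmB1 : (μ B1).toReal ≤ (μ B).toReal :=
    ENNReal.toReal_mono (hfin _) (measure_mono Set.inter_subset_right)
  have hγ0 : (0:ℝ) < γ := lt_of_lt_of_le one_pos hγ
  -- unfold condP in hypotheses and goal
  have hU : t0 / m0 ≤ γ * (t1 / m1) := hsensU
  have hmpos : 0 < m := by rw [hm]; linarith
  show t / m / (m1 / m + γ * (1 - m1 / m)) ≤ t1 / m1
  have hden : m1 / m + γ * (1 - m1 / m) = (m1 + γ * m0) / m := by
    rw [hm]; field_simp; ring
  have hre : t / m / ((m1 + γ * m0) / m) = t / (m1 + γ * m0) := by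
    rw [div_div, mul_div_cancel₀ _ hmpos.ne']
  rw [hden, hre]
  have hdpos : 0 < m1 + γ * m0 := by positivity
  rw [div_le_div_iff₀ hdpos hm1]
  have hU' : t0 / m0 ≤ γ * t1 / m1 := by rw [mul_div_assoc]; exact hU
  have hkey := (div_le_div_iff₀ hm0 hm1).mp hU'
  nlinarith [ht]
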